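/- arXiv:1711.09406 — 2 statements merged into one kernel-verified Lean document; each statement's English description precedes it below -/
import Mathlib

section
/- Let p be a positive rational with √p irrational, and let x₁ = a₁ + b₁√p, …, xₙ = aₙ + bₙ√p (n ≥ 2) with all aᵢ, bᵢ ∈ ℚ, all xᵢ > 0, and such that xᵢ/xⱼ ∉ ℚ and xᵢ·xⱼ ∉ ℚ whenever i ≠ j. Suppose aᵢ − bᵢ√p < 0 for all i, and let z = e + f√p > 0 with e, f ∈ ℚ, f > 0 and |e|/f = max_{1 ≤ i ≤ n} |aᵢ|/bᵢ. Then the rectangle of aspect ratio z admits NO diverse tiling by rectangles with aspect ratios x₁, …, xₙ. -/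
/-- A tiling of the rectangle `[0,1] × [0,r]` by finitely many closed
axis-parallel rectangles with positive side lengths, covering the rectangle
and having pairwise disjoint interiors. -/
structure RectTiling (r : ℝ) where
  m : ℕ
  px : Fin m → ℝ
  py : Fin m → ℝ
  w : Fin m → ℝ
  h : Fin m → ℝ
  w_pos : ∀ k, 0 < w k
  h_pos : ∀ k, 0 < h k
  cover : (Set.Icc (0:ℝ) 1 ×ˢ Set.Icc (0:ℝ) r) =
      ⋃ k, Set.Icc (px k) (px k + w k) ×ˢ Set.Icc (py k) (py k + h k)
  disj : ∀ k l, k ≠ l →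
      Disjoint ((Set.Ioo (px k) (px k + w k)) ×ˢ (Set.Ioo (py k) (py k + h k)))
               ((Set.Ioo (px l) (px l + w l)) ×ˢ (Set.Ioo (py l) (py l + h l)))

/-- Tile `k` of the tiling `T` has aspect ratio `x` (in one of the two orientations). -/
def RectTiling.ratioOK {r : ℝ} (T : RectTiling r) (k : Fin T.m) (x : ℝ) : Prop :=
  T.h k / T.w k = x ∨ T.w k / T.h k = x

/-- The rectangle of aspect ratio `r` is tileable by rectangles with aspect
ratios among `X`. -/
def Tileable (r : ℝ) {n : ℕ} (X : Fin n → ℝ) : Prop :=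
  ∃ T : RectTiling r, ∀ k, ∃ i, T.ratioOK k (X i)

/-- The rectangle of aspect ratio `r` admits a *diverse* tiling by rectangles
with aspect ratios `X 0, …, X (n-1)`: every tile has some ratio `X i`, and for
every `i` some tile has ratio `X i`. -/
def DiverselyTileable (r : ℝ) {n : ℕ} (X : Fin n → ℝ) : Prop :=
  ∃ T : RectTiling r, (∀ k, ∃ i, T.ratioOK k (X i)) ∧ (∀ i, ∃ k, T.ratioOK k (X i))

set_option maxHeartbeats 1600000
set_option synthInstance.maxHeartbeats 400000


lemma tele_sum (φ : ℝ → ℝ) (hφ : ∀ x y, φ (x - y) = φ x - φ y) (g : ℕ → ℝ) (a b : ℕ)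
    (hab : a ≤ b) :
    ∑ i ∈ Finset.Ico a b, φ (g (i + 1) - g i) = φ (g b - g a) := by
  rw [Finset.sum_Ico_eq_sum_range]
  have key := Finset.sum_range_sub (fun u => φ (g (a + u) - g a)) (b - a)
  calc ∑ t ∈ Finset.range (b - a), φ (g (a + t + 1) - g (a + t))
      = ∑ t ∈ Finset.range (b - a),
        ((fun u => φ (g (a + u) - g a)) (t + 1) - (fun u => φ (g (a + u) - g a)) t) := by
        apply Finset.sum_congr rfl
        intro t _
        simp only
        rw [← hφ]
        congr 1
        ring
    _ = φ (g (a + (b - a)) - g a) - φ (g (a + 0) - g a) := key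
    _ = φ (g b - g a) := by
        have h1 : a + (b - a) = b := by omega
        have h0 : φ 0 = 0 := by have := hφ 0 0; simp at this; linarith
        rw [h1]
        simp [h0]

lemma grid_aux (s : Finset ℝ) (lo hi : ℝ) (hlo : lo ∈ s) (hhi : hi ∈ s)
    (hbd : ∀ t ∈ s, lo ≤ t ∧ t ≤ hi) :
    ∃ (nn : ℕ) (g : ℕ → ℝ),
      (∀ i j, i < j → j < nn + 1 → g i < g j) ∧
      (∀ t, t ∈ s ↔ ∃ i, i < nn + 1 ∧ g i = t) ∧
      g 0 = lo ∧ g nn = hi := by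
  classical
  set l := s.sort (· ≤ ·) with hl
  have hlen : 0 < l.length := by
    rw [hl, Finset.length_sort]
    exact Finset.card_pos.2 ⟨lo, hlo⟩
  obtain ⟨nn, hnn⟩ : ∃ nn, l.length = nn + 1 := ⟨l.length - 1, by omega⟩
  have hsort : l.SortedLT := Finset.sortedLT_sort s
  have hmono : ∀ i j, i < j → j < nn + 1 → l.getD i 0 < l.getD j 0 := by
    intro i j hij hj
    have hj' : j < l.length := by omega
    have hi' : i < l.length := by omega
    have h := hsort.strictMono_get (a := ⟨i, hi'⟩) (b := ⟨j, hj'⟩) (by exact hij)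
    rw [List.getD_eq_getElem l 0 hi', List.getD_eq_getElem l 0 hj']
    simpa [List.get_eq_getElem] using h
  have hmem : ∀ t, t ∈ s ↔ ∃ i, i < nn + 1 ∧ l.getD i 0 = t := by
    intro t
    rw [show (t ∈ s) = (t ∈ l) from by rw [hl]; simp [Finset.mem_sort], List.mem_iff_getElem]
    constructor
    · rintro ⟨i, hi, rfl⟩
      exact ⟨i, by omega, List.getD_eq_getElem l 0 hi⟩
    · rintro ⟨i, hi, rfl⟩
      exact ⟨i, by omega, (List.getD_eq_getElem l 0 (by omega)).symm⟩
  have h0mem : l.getD 0 0 ∈ s := (hmem _).2 ⟨0, by omega, rfl⟩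
  have hnmem : l.getD nn 0 ∈ s := (hmem _).2 ⟨nn, by omega, rfl⟩
  have h0 : l.getD 0 0 = lo := by
    obtain ⟨i, hi, hieq⟩ := (hmem lo).1 hlo
    have hlelo : lo ≤ l.getD 0 0 := (hbd _ h0mem).1
    rcases Nat.eq_zero_or_pos i with h | h
    · rw [h] at hieq; exact hieq
    · have hlt := hmono 0 i h hi
      rw [hieq] at hlt; linarith
  have hn : l.getD nn 0 = hi := by
    obtain ⟨i, hi', hieq⟩ := (hmem hi).1 hhi
    have hlehi : l.getD nn 0 ≤ hi := (hbd _ hnmem).2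
    rcases eq_or_lt_of_le (show i ≤ nn by omega) with h | h
    · rw [← h]; exact hieq
    · have hlt := hmono i nn h (by omega)
      rw [hieq] at hlt; linarith
  exact ⟨nn, fun i => l.getD i 0, hmono, hmem, h0, hn⟩

lemma sum_biadd_tiling {r : ℝ} (hr : 0 < r) (T : RectTiling r) (F : ℝ → ℝ → ℝ)
    (hFl : ∀ a b c, F (a + b) c = F a c + F b c)
    (hFr : ∀ a b c, F a (b + c) = F a b + F a c) :
    ∑ k : Fin T.m, F (T.w k) (T.h k) = F 1 r := by
  classical
  have hFlsub : ∀ a b c, F (a - b) c = F a c - F b c := by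
    intro a b c
    have := hFl (a - b) b c
    rw [sub_add_cancel] at this
    linarith
  have hFrsub : ∀ a b c, F a (b - c) = F a b - F a c := by
    intro a b c
    have := hFr a (b - c) c
    rw [sub_add_cancel] at this
    linarith
  -- tiles are inside the big rectangle
  have hsub : ∀ k, (Set.Icc (T.px k) (T.px k + T.w k) ×ˢ Set.Icc (T.py k) (T.py k + T.h k)
      : Set (ℝ × ℝ)) ⊆ Set.Icc (0:ℝ) 1 ×ˢ Set.Icc (0:ℝ) r := by
    intro k
    rw [T.cover]
    exact Set.subset_iUnion
      (fun k => Set.Icc (T.px k) (T.px k + T.w k) ×ˢ Set.Icc (T.py k) (T.py k + T.h k)) k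
  have hbounds : ∀ k, 0 ≤ T.px k ∧ T.px k + T.w k ≤ 1 ∧ 0 ≤ T.py k ∧ T.py k + T.h k ≤ r := by
    intro k
    have hw := T.w_pos k; have hh := T.h_pos k
    have h1 : ((T.px k, T.py k) : ℝ × ℝ) ∈ Set.Icc (0:ℝ) 1 ×ˢ Set.Icc (0:ℝ) r := by
      apply hsub k
      constructor <;> simp [Set.mem_Icc] <;> linarith
    have h2 : ((T.px k + T.w k, T.py k + T.h k) : ℝ × ℝ)
        ∈ Set.Icc (0:ℝ) 1 ×ˢ Set.Icc (0:ℝ) r := by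
      apply hsub k
      constructor <;> simp [Set.mem_Icc] <;> linarith
    obtain ⟨h1a, h1b⟩ := h1
    obtain ⟨h2a, h2b⟩ := h2
    exact ⟨(Set.mem_Icc.1 h1a).1, (Set.mem_Icc.1 h2a).2,
      (Set.mem_Icc.1 h1b).1, (Set.mem_Icc.1 h2b).2⟩
  set xs : Finset ℝ := (({0, 1} : Finset ℝ) ∪ Finset.image T.px Finset.univ)
      ∪ Finset.image (fun k => T.px k + T.w k) Finset.univ with hxs
  set ys : Finset ℝ := (({0, r} : Finset ℝ) ∪ Finset.image T.py Finset.univ)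
      ∪ Finset.image (fun k => T.py k + T.h k) Finset.univ with hys
  have hxmem0 : (0:ℝ) ∈ xs := by simp [hxs]
  have hxmem1 : (1:ℝ) ∈ xs := by simp [hxs]
  have hymem0 : (0:ℝ) ∈ ys := by simp [hys]
  have hymemr : r ∈ ys := by simp [hys]
  have hxmempx : ∀ k, T.px k ∈ xs := fun k =>
    Finset.mem_union_left _ (Finset.mem_union_right _
      (Finset.mem_image_of_mem _ (Finset.mem_univ k)))
  have hxmempw : ∀ k, T.px k + T.w k ∈ xs := fun k =>
    Finset.mem_union_right _ (Finset.mem_image_of_mem _ (Finset.mem_univ k))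
  have hymempy : ∀ k, T.py k ∈ ys := fun k =>
    Finset.mem_union_left _ (Finset.mem_union_right _
      (Finset.mem_image_of_mem _ (Finset.mem_univ k)))
  have hymemph : ∀ k, T.py k + T.h k ∈ ys := fun k =>
    Finset.mem_union_right _ (Finset.mem_image_of_mem _ (Finset.mem_univ k))
  have hxbd : ∀ t ∈ xs, 0 ≤ t ∧ t ≤ 1 := by
    intro t ht
    simp only [hxs, Finset.mem_union, Finset.mem_insert, Finset.mem_singleton,
      Finset.mem_image, Finset.mem_univ, true_and] at ht
    rcases ht with ((h | h) | ⟨k, rfl⟩) | ⟨k, rfl⟩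
    · subst h; norm_num
    · subst h; norm_num
    · obtain ⟨h1, h2, h3, h4⟩ := hbounds k
      have := T.w_pos k
      constructor <;> linarith
    · obtain ⟨h1, h2, h3, h4⟩ := hbounds k
      have := T.w_pos k
      constructor <;> linarith
  have hybd : ∀ t ∈ ys, 0 ≤ t ∧ t ≤ r := by
    intro t ht
    simp only [hys, Finset.mem_union, Finset.mem_insert, Finset.mem_singleton,
      Finset.mem_image, Finset.mem_univ, true_and] at ht
    rcases ht with ((h | h) | ⟨k, rfl⟩) | ⟨k, rfl⟩
    · subst h; constructor <;> linarith
    · subst h; constructor <;> linarith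
    · obtain ⟨h1, h2, h3, h4⟩ := hbounds k
      have := T.h_pos k
      constructor <;> linarith
    · obtain ⟨h1, h2, h3, h4⟩ := hbounds k
      have := T.h_pos k
      constructor <;> linarith
  obtain ⟨nx, gx, hgx, hmemx, hgx0, hgxn⟩ := grid_aux xs 0 1 hxmem0 hxmem1 hxbd
  obtain ⟨ny, gy, hgy, hmemy, hgy0, hgyn⟩ := grid_aux ys 0 r hymem0 hymemr hybd
  have hgxle : ∀ i j, i ≤ j → j < nx + 1 → gx i ≤ gx j := by
    intro i j hij hj
    rcases eq_or_lt_of_le hij with h | h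
    · rw [h]
    · exact le_of_lt (hgx i j h hj)
  have hgyle : ∀ i j, i ≤ j → j < ny + 1 → gy i ≤ gy j := by
    intro i j hij hj
    rcases eq_or_lt_of_le hij with h | h
    · rw [h]
    · exact le_of_lt (hgy i j h hj)
  set cells : Finset (ℕ × ℕ) := Finset.range nx ×ˢ Finset.range ny with hcells
  set S : Fin T.m → Finset (ℕ × ℕ) := fun k => cells.filter (fun ij =>
      T.px k ≤ gx ij.1 ∧ gx (ij.1 + 1) ≤ T.px k + T.w k ∧
      T.py k ≤ gy ij.2 ∧ gy (ij.2 + 1) ≤ T.py k + T.h k) with hS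
  -- per tile sum
  have tile_sum : ∀ k, ∑ ij ∈ S k,
      F (gx (ij.1 + 1) - gx ij.1) (gy (ij.2 + 1) - gy ij.2) = F (T.w k) (T.h k) := by
    intro k
    obtain ⟨ia, hia, hia'⟩ := (hmemx _).1 (hxmempx k)
    obtain ⟨ib, hib, hib'⟩ := (hmemx _).1 (hxmempw k)
    obtain ⟨ja, hja, hja'⟩ := (hmemy _).1 (hymempy k)
    obtain ⟨jb, hjb, hjb'⟩ := (hmemy _).1 (hymemph k)
    have hiab : ia < ib := by
      by_contra hcon
      have h := hgxle ib ia (by omega) hia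
      rw [hia', hib'] at h
      linarith [T.w_pos k]
    have hjab : ja < jb := by
      by_contra hcon
      have h := hgyle jb ja (by omega) hja
      rw [hja', hjb'] at h
      linarith [T.h_pos k]
    have hSk : S k = Finset.Ico ia ib ×ˢ Finset.Ico ja jb := by
      ext ⟨i, j⟩
      simp only [hS, Finset.mem_filter, hcells, Finset.mem_product, Finset.mem_range,
        Finset.mem_Ico]
      constructor
      · rintro ⟨⟨hi, hj⟩, h1, h2, h3, h4⟩
        refine ⟨⟨?_, ?_⟩, ?_, ?_⟩
        · by_contra hcon
          have h := hgxle (i + 1) ia (by omega) hia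
          have h' := hgx i (i + 1) (by omega) (by omega)
          rw [hia'] at h
          linarith
        · by_contra hcon
          have h := hgxle ib i (by omega) (by omega)
          have h' := hgx i (i + 1) (by omega) (by omega)
          rw [hib'] at h
          linarith
        · by_contra hcon
          have h := hgyle (j + 1) ja (by omega) hja
          have h' := hgy j (j + 1) (by omega) (by omega)
          rw [hja'] at h
          linarith
        · by_contra hcon
          have h := hgyle jb j (by omega) (by omega)
          have h' := hgy j (j + 1) (by omega) (by omega)
          rw [hjb'] at h
          linarith
      · rintro ⟨⟨h1, h2⟩, h3, h4⟩
        have hi : i < nx := by omega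
        have hj : j < ny := by omega
        refine ⟨⟨hi, hj⟩, ?_, ?_, ?_, ?_⟩
        · rw [← hia']; exact hgxle ia i h1 (by omega)
        · rw [← hib']; exact hgxle (i + 1) ib (by omega) hib
        · rw [← hja']; exact hgyle ja j h3 (by omega)
        · rw [← hjb']; exact hgyle (j + 1) jb (by omega) hjb
    rw [hSk, Finset.sum_product]
    have step1 : ∀ i, ∑ j ∈ Finset.Ico ja jb,
        F (gx (i + 1) - gx i) (gy (j + 1) - gy j) = F (gx (i + 1) - gx i) (T.h k) := by
      intro i
      rw [tele_sum _ (fun x y => hFrsub _ x y) gy ja jb (le_of_lt hjab), hja', hjb']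
      congr 1
      ring
    calc ∑ i ∈ Finset.Ico ia ib, ∑ j ∈ Finset.Ico ja jb,
          F (gx (i + 1) - gx i) (gy (j + 1) - gy j)
        = ∑ i ∈ Finset.Ico ia ib, F (gx (i + 1) - gx i) (T.h k) :=
          Finset.sum_congr rfl (fun i _ => step1 i)
      _ = F (T.px k + T.w k - T.px k) (T.h k) := by
          rw [tele_sum (fun x => F x (T.h k)) (fun x y => hFlsub x y _) gx ia ib hiab.le,
            hia', hib']
      _ = F (T.w k) (T.h k) := by congr 1; ring
  -- disjointness of cell sets
  have hdisjS : ∀ k l : Fin T.m, k ≠ l → Disjoint (S k) (S l) := by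
    intro k l hkl
    rw [Finset.disjoint_left]
    rintro ⟨i, j⟩ hk hl
    simp only [hS, Finset.mem_filter, hcells, Finset.mem_product, Finset.mem_range] at hk hl
    obtain ⟨⟨hi, hj⟩, hk1, hk2, hk3, hk4⟩ := hk
    obtain ⟨-, hl1, hl2, hl3, hl4⟩ := hl
    have hxi : gx i < gx (i + 1) := hgx i (i + 1) (by omega) (by omega)
    have hyj : gy j < gy (j + 1) := hgy j (j + 1) (by omega) (by omega)
    have hd := T.disj k l hkl
    rw [Set.disjoint_left] at hd
    exact hd (a := ((gx i + gx (i + 1)) / 2, (gy j + gy (j + 1)) / 2))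
      ⟨Set.mem_Ioo.2 ⟨by linarith, by linarith⟩, Set.mem_Ioo.2 ⟨by linarith, by linarith⟩⟩
      ⟨Set.mem_Ioo.2 ⟨by linarith, by linarith⟩, Set.mem_Ioo.2 ⟨by linarith, by linarith⟩⟩
  -- covering
  have hcov : cells = Finset.univ.biUnion S := by
    apply Finset.Subset.antisymm
    · rintro ⟨i, j⟩ hij
      simp only [hcells, Finset.mem_product, Finset.mem_range] at hij
      obtain ⟨hi, hj⟩ := hij
      have hxi : gx i < gx (i + 1) := hgx i (i + 1) (by omega) (by omega)
      have hyj : gy j < gy (j + 1) := hgy j (j + 1) (by omega) (by omega)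
      have hcx : ((gx i + gx (i + 1)) / 2, (gy j + gy (j + 1)) / 2)
          ∈ (Set.Icc (0:ℝ) 1 ×ˢ Set.Icc (0:ℝ) r) := by
        have b1 : (0:ℝ) ≤ gx i := by rw [← hgx0]; exact hgxle 0 i (by omega) (by omega)
        have b2 : gx (i + 1) ≤ 1 := by rw [← hgxn]; exact hgxle (i + 1) nx (by omega) (by omega)
        have b3 : (0:ℝ) ≤ gy j := by rw [← hgy0]; exact hgyle 0 j (by omega) (by omega)
        have b4 : gy (j + 1) ≤ r := by rw [← hgyn]; exact hgyle (j + 1) ny (by omega) (by omega)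
        exact ⟨Set.mem_Icc.2 ⟨by linarith, by linarith⟩, Set.mem_Icc.2 ⟨by linarith, by linarith⟩⟩
      rw [T.cover] at hcx
      obtain ⟨k, hmem⟩ := Set.mem_iUnion.1 hcx
      obtain ⟨hmem1, hmem2⟩ := hmem
      rw [Set.mem_Icc] at hmem1 hmem2
      have hpx : T.px k ≤ gx i := by
        obtain ⟨mm, hm, hm'⟩ := (hmemx _).1 (hxmempx k)
        rcases le_or_gt mm i with h | h
        · rw [← hm']; exact hgxle mm i h (by omega)
        · exfalso
          have h2 := hgxle (i + 1) mm h hm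
          rw [hm'] at h2
          linarith [hmem1.1]
      have hpw : gx (i + 1) ≤ T.px k + T.w k := by
        obtain ⟨mm, hm, hm'⟩ := (hmemx _).1 (hxmempw k)
        rcases le_or_gt (i + 1) mm with h | h
        · rw [← hm']; exact hgxle (i + 1) mm h hm
        · exfalso
          have h2 := hgxle mm i (by omega) (by omega)
          rw [hm'] at h2
          linarith [hmem1.2]
      have hpy : T.py k ≤ gy j := by
        obtain ⟨mm, hm, hm'⟩ := (hmemy _).1 (hymempy k)
        rcases le_or_gt mm j with h | h
        · rw [← hm']; exact hgyle mm j h (by omega)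
        · exfalso
          have h2 := hgyle (j + 1) mm h hm
          rw [hm'] at h2
          linarith [hmem2.1]
      have hph : gy (j + 1) ≤ T.py k + T.h k := by
        obtain ⟨mm, hm, hm'⟩ := (hmemy _).1 (hymemph k)
        rcases le_or_gt (j + 1) mm with h | h
        · rw [← hm']; exact hgyle (j + 1) mm h hm
        · exfalso
          have h2 := hgyle mm j (by omega) (by omega)
          rw [hm'] at h2
          linarith [hmem2.2]
      refine Finset.mem_biUnion.2 ⟨k, Finset.mem_univ k, ?_⟩
      simp only [hS, Finset.mem_filter, hcells, Finset.mem_product, Finset.mem_range]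
      exact ⟨⟨hi, hj⟩, hpx, hpw, hpy, hph⟩
    · intro ij hij
      obtain ⟨k, -, hk⟩ := Finset.mem_biUnion.1 hij
      exact Finset.filter_subset _ _ hk
  -- assemble
  calc ∑ k : Fin T.m, F (T.w k) (T.h k)
      = ∑ k : Fin T.m, ∑ ij ∈ S k,
          F (gx (ij.1 + 1) - gx ij.1) (gy (ij.2 + 1) - gy ij.2) :=
        Finset.sum_congr rfl (fun k _ => (tile_sum k).symm)
    _ = ∑ ij ∈ Finset.univ.biUnion S,
          F (gx (ij.1 + 1) - gx ij.1) (gy (ij.2 + 1) - gy ij.2) :=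
        (Finset.sum_biUnion (fun k _ l _ hkl => hdisjS k l hkl)).symm
    _ = ∑ ij ∈ cells, F (gx (ij.1 + 1) - gx ij.1) (gy (ij.2 + 1) - gy ij.2) := by rw [← hcov]
    _ = F 1 r := by
        rw [hcells, Finset.sum_product]
        have step : ∀ i, ∑ j ∈ Finset.range ny,
            F (gx (i + 1) - gx i) (gy (j + 1) - gy j) = F (gx (i + 1) - gx i) r := by
          intro i
          rw [Finset.range_eq_Ico,
            tele_sum _ (fun x y => hFrsub _ x y) gy 0 ny (by omega), hgy0, hgyn, sub_zero]
        rw [Finset.sum_congr rfl (fun i _ => step i), Finset.range_eq_Ico,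
          tele_sum (fun x => F x r) (fun x y => hFlsub x y _) gx 0 nx (by omega),
          hgx0, hgxn, sub_zero]


lemma le_of_sq_le (m0 a b : ℚ) (hb : 0 < b) (hm0 : 0 ≤ m0) (ha : a ^ 2 ≤ m0 ^ 2 * b ^ 2) :
    a ≤ b * m0 := by
  rcases le_or_gt a 0 with h | h
  · have := mul_nonneg hm0 hb.le
    linarith
  · nlinarith [mul_nonneg hm0 hb.le]

lemma lt_of_sq_lt (m0 a b : ℚ) (hb : 0 < b) (hm0 : 0 ≤ m0) (ha : a ^ 2 < m0 ^ 2 * b ^ 2) :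
    a < b * m0 := by
  rcases le_or_gt a 0 with h | h
  · have h2 := mul_nonneg hm0 hb.le
    rcases eq_or_lt_of_le h2 with h3 | h3
    · nlinarith
    · linarith
  · nlinarith [mul_nonneg hm0 hb.le]

lemma quad_key (p m0 a b u1 u2 : ℚ) (hb : 0 < b) (hm0 : 0 ≤ m0)
    (ha : a ^ 2 ≤ m0 ^ 2 * b ^ 2) (hmp : m0 ^ 2 < p) :
    (a - b * m0) * u1 ^ 2 + (2 * m0 * (b * m0 - a)) * (u1 * u2)
      + (a * (2 * m0 ^ 2 - p) - p * b * m0) * u2 ^ 2 ≤ 0 := by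
  have hab : a ≤ b * m0 := le_of_sq_le m0 a b hb hm0 ha
  rcases eq_or_lt_of_le hab with h | h
  · subst h
    nlinarith [mul_nonneg (mul_nonneg (mul_nonneg hb.le hm0) (sq_nonneg u2))
      (sub_pos.2 hmp).le]
  · nlinarith [sq_nonneg (2 * (a - b * m0) * u1 + 2 * m0 * (b * m0 - a) * u2),
      mul_nonneg (mul_nonneg (sub_pos.2 hmp).le (sub_nonneg.2 ha)) (sq_nonneg u2),
      sub_pos.2 h, sq_nonneg u1, sq_nonneg u2]

lemma quad_key_strict (p m0 a b u1 u2 : ℚ) (hb : 0 < b) (hm0 : 0 ≤ m0)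
    (ha : a ^ 2 < m0 ^ 2 * b ^ 2) (hmp : m0 ^ 2 < p) (hu : ¬(u1 = 0 ∧ u2 = 0)) :
    (a - b * m0) * u1 ^ 2 + (2 * m0 * (b * m0 - a)) * (u1 * u2)
      + (a * (2 * m0 ^ 2 - p) - p * b * m0) * u2 ^ 2 < 0 := by
  have hab : a < b * m0 := lt_of_sq_lt m0 a b hb hm0 ha
  by_cases hu2 : u2 = 0
  · have hu1 : u1 ≠ 0 := fun h1 => hu ⟨h1, hu2⟩
    have h1 : 0 < u1 ^ 2 := by positivity
    subst hu2
    nlinarith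
  · have h2 : 0 < u2 ^ 2 := by positivity
    nlinarith [sq_nonneg (2 * (a - b * m0) * u1 + 2 * m0 * (b * m0 - a) * u2),
      mul_pos (mul_pos (sub_pos.2 hmp) (sub_pos.2 ha)) h2,
      sub_pos.2 hab, sq_nonneg u1]

noncomputable section
namespace NoDiv

variable (p : ℚ)

def sq : ℝ := Real.sqrt p

lemma sq_pos (hp : 0 < p) : 0 < sq p := Real.sqrt_pos.2 (by exact_mod_cast hp)

lemma sq_sq (hp : 0 < p) : sq p * sq p = (p : ℝ) := Real.mul_self_sqrt (by exact_mod_cast hp.le)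

lemma quniq (hirr : Irrational (sq p)) {a b : ℚ} (h : (a : ℝ) + (b : ℝ) * sq p = 0) : a = 0 ∧ b = 0 := by
  by_cases hb : b = 0
  · subst hb
    simp at h
    exact ⟨by exact_mod_cast h, rfl⟩
  · exfalso
    apply hirr
    refine ⟨-a / b, ?_⟩
    have hb' : (b : ℝ) ≠ 0 := by exact_mod_cast hb
    push_cast
    field_simp
    linarith

lemma quniq2 (hirr : Irrational (sq p)) {a b a' b' : ℚ} (h : (a : ℝ) + (b : ℝ) * sq p = (a' : ℝ) + (b' : ℝ) * sq p) :
    a = a' ∧ b = b' := by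
  have h2 : ((a - a' : ℚ) : ℝ) + ((b - b' : ℚ) : ℝ) * sq p = 0 := by push_cast; linarith
  obtain ⟨h3, h4⟩ := quniq p hirr h2
  exact ⟨by linarith [sub_eq_zero.1 h3], by linarith [sub_eq_zero.1 h4]⟩

def Sf (hp : 0 < p) (hirr : Irrational (sq p)) : Subfield ℝ where
  carrier := {x : ℝ | ∃ a b : ℚ, x = (a : ℝ) + (b : ℝ) * sq p}
  one_mem' := ⟨1, 0, by norm_num⟩
  zero_mem' := ⟨0, 0, by norm_num⟩
  add_mem' := by
    rintro x y ⟨a, b, rfl⟩ ⟨c, d, rfl⟩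
    exact ⟨a + c, b + d, by push_cast; ring⟩
  neg_mem' := by
    rintro x ⟨a, b, rfl⟩
    exact ⟨-a, -b, by push_cast; ring⟩
  mul_mem' := by
    rintro x y ⟨a, b, rfl⟩ ⟨c, d, rfl⟩
    refine ⟨a * c + p * b * d, a * d + b * c, ?_⟩
    push_cast
    linear_combination (b : ℝ) * (d : ℝ) * sq_sq p hp
  inv_mem' := by
    intro x hx
    obtain ⟨a, b, rfl⟩ := hx
    by_cases hx0 : (a : ℝ) + (b : ℝ) * sq p = 0
    · rw [hx0]
      exact ⟨0, 0, by norm_num⟩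
    · have hN : a ^ 2 - p * b ^ 2 ≠ 0 := by
        intro hN0
        by_cases hb : b = 0
        · rw [hb] at hN0
          simp at hN0
          apply hx0
          rw [hb, hN0]
          norm_num
        · apply hirr
          refine ⟨|a / b|, ?_⟩
          have h1 : (a : ℝ) ^ 2 = (p : ℝ) * (b : ℝ) ^ 2 := by
            have h0 : (a ^ 2 : ℚ) = p * b ^ 2 := by linarith
            exact_mod_cast h0
          have h2 : |(a : ℝ) / (b : ℝ)| ^ 2 = (p : ℝ) := by
            rw [sq_abs, div_pow, h1]
            have hb' : (b : ℝ) ≠ 0 := by exact_mod_cast hb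
            field_simp
          have h3 : sq p ^ 2 = (p : ℝ) := by
            rw [pow_two]; exact sq_sq p hp
          have h4 : |(a : ℝ) / (b : ℝ)| = sq p := by
            nlinarith [abs_nonneg ((a : ℝ) / (b : ℝ)), (sq_pos p hp).le, h2, h3]
          rw [← h4]
          norm_cast
      set N : ℚ := a ^ 2 - p * b ^ 2 with hNdef
      refine ⟨a / N, -b / N, ?_⟩
      have hN' : (N : ℝ) ≠ 0 := by exact_mod_cast hN
      symm
      apply eq_inv_of_mul_eq_one_left
      push_cast
      field_simp
      have hN2 : (N : ℝ) = (a : ℝ) ^ 2 - (p : ℝ) * (b : ℝ) ^ 2 := by exact_mod_cast hNdef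
      linear_combination (-(b : ℝ) * (b : ℝ)) * sq_sq p hp - hN2

lemma mem_Sf (hp : 0 < p) (hirr : Irrational (sq p)) {x : ℝ} : x ∈ Sf p hp hirr ↔ ∃ a b : ℚ, x = (a : ℝ) + (b : ℝ) * sq p :=
  Iff.rfl

lemma exists_co (hp : 0 < p) (hirr : Irrational (sq p)) (x : Sf p hp hirr) :
    ∃ ab : ℚ × ℚ, (x : ℝ) = (ab.1 : ℝ) + (ab.2 : ℝ) * sq p := by
  obtain ⟨a, b, h⟩ := (mem_Sf p hp hirr).1 x.2
  exact ⟨(a, b), h⟩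

def co (hp : 0 < p) (hirr : Irrational (sq p)) (x : Sf p hp hirr) : ℚ × ℚ := (exists_co p hp hirr x).choose

lemma co_spec (hp : 0 < p) (hirr : Irrational (sq p)) (x : Sf p hp hirr) :
    (x : ℝ) = ((co p hp hirr x).1 : ℝ) + ((co p hp hirr x).2 : ℝ) * sq p :=
  (exists_co p hp hirr x).choose_spec

lemma co_val (hp : 0 < p) (hirr : Irrational (sq p)) {x : Sf p hp hirr} {a b : ℚ} (h : (x : ℝ) = (a : ℝ) + (b : ℝ) * sq p) :
    co p hp hirr x = (a, b) := by
  have h2 := co_spec p hp hirr x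
  rw [h] at h2
  obtain ⟨h3, h4⟩ := quniq2 p hirr h2.symm
  exact Prod.ext h3 h4

def conj (hp : 0 < p) (hirr : Irrational (sq p)) (x : Sf p hp hirr) : ℝ :=
  ((co p hp hirr x).1 : ℝ) - ((co p hp hirr x).2 : ℝ) * sq p

lemma conj_val (hp : 0 < p) (hirr : Irrational (sq p)) {x : Sf p hp hirr} {a b : ℚ} (h : (x : ℝ) = (a : ℝ) + (b : ℝ) * sq p) :
    conj p hp hirr x = (a : ℝ) - (b : ℝ) * sq p := by
  rw [conj, co_val p hp hirr h]

lemma conj_zero (hp : 0 < p) (hirr : Irrational (sq p)) : conj p hp hirr 0 = 0 := by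
  rw [conj_val p hp hirr (a := 0) (b := 0) (by norm_num)]
  norm_num

lemma conj_one (hp : 0 < p) (hirr : Irrational (sq p)) : conj p hp hirr 1 = 1 := by
  rw [conj_val p hp hirr (a := 1) (b := 0) (by norm_num)]
  norm_num

lemma conj_add (hp : 0 < p) (hirr : Irrational (sq p)) (x y : Sf p hp hirr) :
    conj p hp hirr (x + y) = conj p hp hirr x + conj p hp hirr y := by
  have hx := co_spec p hp hirr x
  have hy := co_spec p hp hirr y
  have hxy : ((x + y : Sf p hp hirr) : ℝ)
      = (((co p hp hirr x).1 + (co p hp hirr y).1 : ℚ) : ℝ)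
        + (((co p hp hirr x).2 + (co p hp hirr y).2 : ℚ) : ℝ) * sq p := by
    push_cast
    rw [hx, hy]
    ring
  rw [conj_val p hp hirr hxy, conj, conj]
  push_cast
  ring

lemma conj_mul (hp : 0 < p) (hirr : Irrational (sq p)) (x y : Sf p hp hirr) :
    conj p hp hirr (x * y) = conj p hp hirr x * conj p hp hirr y := by
  have hx := co_spec p hp hirr x
  have hy := co_spec p hp hirr y
  set ax := (co p hp hirr x).1
  set bx := (co p hp hirr x).2
  set ay := (co p hp hirr y).1
  set bb := (co p hp hirr y).2
  have hxy : ((x * y : Sf p hp hirr) : ℝ)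
      = ((ax * ay + p * bx * bb : ℚ) : ℝ) + ((ax * bb + bx * ay : ℚ) : ℝ) * sq p := by
    push_cast
    rw [hx, hy]
    linear_combination (bx : ℝ) * (bb : ℝ) * sq_sq p hp
  rw [conj_val p hp hirr hxy, conj_val p hp hirr hx, conj_val p hp hirr hy]
  push_cast
  linear_combination (-(bx : ℝ) * (bb : ℝ)) * sq_sq p hp

lemma conj_eq_zero (hp : 0 < p) (hirr : Irrational (sq p)) {x : Sf p hp hirr} (h : conj p hp hirr x = 0) : x = 0 := by
  have hx := co_spec p hp hirr x
  rw [conj] at h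
  have h2 : ((co p hp hirr x).1 : ℝ) + ((-(co p hp hirr x).2 : ℚ) : ℝ) * sq p = 0 := by
    push_cast
    linarith
  obtain ⟨h3, h4⟩ := quniq p hirr h2
  have h5 : (co p hp hirr x).2 = 0 := by
    have h6 : -(co p hp hirr x).2 = 0 := h4
    linarith
  apply Subtype.ext
  rw [hx, h3, h5]
  norm_num


variable (p : ℚ) (hp : 0 < p) (hirr : Irrational (sq p))

noncomputable example : Module (Sf p hp hirr) ℝ := inferInstance

example (c : Sf p hp hirr) (v : ℝ) : c • v = (c : ℝ) * v := rfl

def Phi {ι : Type*} (B : Module.Basis ι (Sf p hp hirr) ℝ) (θ : Sf p hp hirr → ℝ) (w : ι → ℝ)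
    (v : ℝ) : ℝ :=
  (B.repr v).sum fun β c => θ c * w β

lemma Phi_add {ι : Type*} (B : Module.Basis ι (Sf p hp hirr) ℝ) (θ : Sf p hp hirr → ℝ) (w : ι → ℝ)
    (hθ0 : θ 0 = 0) (hθadd : ∀ c d, θ (c + d) = θ c + θ d) (v v' : ℝ) :
    Phi p hp hirr B θ w (v + v') = Phi p hp hirr B θ w v + Phi p hp hirr B θ w v' := by
  unfold Phi
  rw [map_add]
  exact Finsupp.sum_add_index' (fun β => by simp [hθ0]) (fun β c d => by rw [hθadd]; ring)

lemma Phi_mulS {ι : Type*} (B : Module.Basis ι (Sf p hp hirr) ℝ) (θ : Sf p hp hirr → ℝ) (w : ι → ℝ)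
    (hθ0 : θ 0 = 0) (hθmul : ∀ c d, θ (c * d) = θ c * θ d) (x : Sf p hp hirr) (v : ℝ) :
    Phi p hp hirr B θ w ((x : ℝ) * v) = θ x * Phi p hp hirr B θ w v := by
  unfold Phi
  have hxv : (x : ℝ) * v = x • v := rfl
  rw [hxv, map_smul]
  rw [Finsupp.sum_smul_index' (fun i => by simp [hθ0])]
  rw [Finsupp.mul_sum]
  apply Finsupp.sum_congr
  intro β _
  rw [smul_eq_mul, hθmul]
  ring

lemma Phi_mem {ι : Type*} (B : Module.Basis ι (Sf p hp hirr) ℝ) (θ : Sf p hp hirr → ℝ) (w : ι → ℝ)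
    (hθ0 : θ 0 = 0) (i1 : ι) (h1 : B i1 = 1) (x : Sf p hp hirr) :
    Phi p hp hirr B θ w (x : ℝ) = θ x * w i1 := by
  unfold Phi
  have hx : (x : ℝ) = x • (1 : ℝ) := by
    show (x : ℝ) = (x : ℝ) * 1
    rw [mul_one]
  rw [hx, ← h1, map_smul, B.repr_self, Finsupp.smul_single, Finsupp.sum_single_index]
  · rw [smul_eq_mul, mul_one]
  · simp [hθ0]

lemma Phi_basis {ι : Type*} (B : Module.Basis ι (Sf p hp hirr) ℝ) (θ : Sf p hp hirr → ℝ) (w : ι → ℝ)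
    (hθ0 : θ 0 = 0) (i : ι) :
    Phi p hp hirr B θ w (B i) = θ 1 * w i := by
  unfold Phi
  rw [B.repr_self, Finsupp.sum_single_index]
  simp [hθ0]

lemma li_pair (u : ℝ) (hu : u ∉ Sf p hp hirr) :
    LinearIndependent (Sf p hp hirr) (Subtype.val : ({1, u} : Set ℝ) → ℝ) := by
  have hpair : LinearIndependent (Sf p hp hirr) ![(1 : ℝ), u] := by
    rw [LinearIndependent.pair_iff]
    intro s t hst
    have hst' : (s : ℝ) + (t : ℝ) * u = 0 := by
      have hst2 : (s : ℝ) * 1 + (t : ℝ) * u = 0 := hst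
      rw [mul_one] at hst2
      exact hst2
    by_cases ht : t = 0
    · subst ht
      refine ⟨Subtype.ext ?_, rfl⟩
      push_cast at hst' ⊢
      simpa using hst'
    · exfalso
      apply hu
      have htR : (t : ℝ) ≠ 0 := fun h0 => ht (Subtype.ext h0)
      have hue : u = ((- s / t : Sf p hp hirr) : ℝ) := by
        push_cast
        field_simp
        linarith
      rw [hue]
      exact (- s / t : Sf p hp hirr).2
  have hrange : Set.range ![(1 : ℝ), u] = {1, u} := by
    ext y
    simp only [Set.mem_range, Fin.exists_fin_two, Set.mem_insert_iff, Set.mem_singleton_iff]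
    constructor
    · rintro (h | h) <;> [exact Or.inl h.symm; exact Or.inr h.symm]
    · rintro (h | h) <;> [exact Or.inl h.symm; exact Or.inr h.symm]
  have h2 := hpair.linearIndepOn_id
  rwa [hrange] at h2

lemma li_one : LinearIndependent (Sf p hp hirr) (Subtype.val : ({(1 : ℝ)} : Set ℝ) → ℝ) :=
  LinearIndepOn.singleton (v := id) one_ne_zero


lemma lengths_mem (p : ℚ) (hp : 0 < p) (hirr : Irrational (sq p))
    {n : ℕ} (X : Fin n → ℝ)
    (hX_mem : ∀ i, X i ∈ Sf p hp hirr)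
    (hconjX : ∀ i, conj p hp hirr ⟨X i, hX_mem i⟩ < 0)
    (z : ℝ) (hzpos : 0 < z) (hz_mem : z ∈ Sf p hp hirr)
    (T : RectTiling z)
    (hrel : ∀ k, ∃ i u, (u = T.w k ∧ T.h k = X i * u) ∨ (u = T.h k ∧ T.w k = X i * u)) :
    ∀ k, T.w k ∈ Sf p hp hirr ∧ T.h k ∈ Sf p hp hirr := by
  intro k₀
  obtain ⟨i₀, u₀, hcase₀⟩ := hrel k₀
  suffices hu : u₀ ∈ Sf p hp hirr by
    rcases hcase₀ with ⟨h1, h2⟩ | ⟨h1, h2⟩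
    · exact ⟨h1 ▸ hu, h2 ▸ mul_mem (hX_mem i₀) hu⟩
    · exact ⟨h2 ▸ mul_mem (hX_mem i₀) hu, h1 ▸ hu⟩
  by_contra hu
  have li : LinearIndepOn (Sf p hp hirr) id ({1, u₀} : Set ℝ) := li_pair p hp hirr u₀ hu
  set Bb := Module.Basis.extend li with hBb
  have h1mem : (1 : ℝ) ∈ li.extend (Set.subset_univ _) :=
    li.subset_extend _ (by simp)
  have humem : u₀ ∈ li.extend (Set.subset_univ _) :=
    li.subset_extend _ (by simp)
  set i1 : ↥(li.extend (Set.subset_univ _)) := ⟨1, h1mem⟩ with hi1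
  set iu : ↥(li.extend (Set.subset_univ _)) := ⟨u₀, humem⟩ with hiu
  have hBi1 : Bb i1 = 1 := Module.Basis.extend_apply_self li i1
  have hBiu : Bb iu = u₀ := Module.Basis.extend_apply_self li iu
  have h1u : (1 : ℝ) ≠ u₀ := fun h => hu (h ▸ one_mem _)
  have hne : i1 ≠ iu := fun h => h1u (congrArg Subtype.val h)
  set θ := conj p hp hirr with hθ
  have hθ0 : θ 0 = 0 := conj_zero p hp hirr
  have hθadd := conj_add p hp hirr
  have hθmul := conj_mul p hp hirr
  have hθ1 : θ 1 = 1 := conj_one p hp hirr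
  set fφ := Phi p hp hirr Bb θ (fun β => if β = i1 then 1 else 0) with hfφ
  set gφ := Phi p hp hirr Bb θ (fun β => if β = iu then 1 else 0) with hgφ
  have hfadd : ∀ v v', fφ (v + v') = fφ v + fφ v' :=
    Phi_add p hp hirr Bb θ _ hθ0 hθadd
  have hgadd : ∀ v v', gφ (v + v') = gφ v + gφ v' :=
    Phi_add p hp hirr Bb θ _ hθ0 hθadd
  have hfS : ∀ (x : Sf p hp hirr) v, fφ ((x : ℝ) * v) = θ x * fφ v :=
    Phi_mulS p hp hirr Bb θ _ hθ0 hθmul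
  have hgS : ∀ (x : Sf p hp hirr) v, gφ ((x : ℝ) * v) = θ x * gφ v :=
    Phi_mulS p hp hirr Bb θ _ hθ0 hθmul
  have hf1 : fφ 1 = 1 := by
    calc fφ 1 = fφ (Bb i1) := by rw [hBi1]
      _ = θ 1 * (if i1 = i1 then (1:ℝ) else 0) := Phi_basis p hp hirr Bb θ _ hθ0 i1
      _ = 1 := by simp [hθ1]
  have hg1 : gφ 1 = 0 := by
    calc gφ 1 = gφ (Bb i1) := by rw [hBi1]
      _ = θ 1 * (if i1 = iu then (1:ℝ) else 0) := Phi_basis p hp hirr Bb θ _ hθ0 i1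
      _ = 0 := by simp [hne]
  have hfu : fφ u₀ = 0 := by
    calc fφ u₀ = fφ (Bb iu) := by rw [hBiu]
      _ = θ 1 * (if iu = i1 then (1:ℝ) else 0) := Phi_basis p hp hirr Bb θ _ hθ0 iu
      _ = 0 := by simp [Ne.symm hne]
  have hgu : gφ u₀ = 1 := by
    calc gφ u₀ = gφ (Bb iu) := by rw [hBiu]
      _ = θ 1 * (if iu = iu then (1:ℝ) else 0) := Phi_basis p hp hirr Bb θ _ hθ0 iu
      _ = 1 := by simp [hθ1]
  set Z : Sf p hp hirr := ⟨z, hz_mem⟩ with hZ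
  have hfz : fφ z = θ Z := by
    have h := Phi_mem p hp hirr Bb θ (fun β => if β = i1 then 1 else 0) hθ0 i1 hBi1 Z
    rw [hfφ]
    simpa using h
  have hgz : gφ z = 0 := by
    have h := Phi_mem p hp hirr Bb θ (fun β => if β = iu then 1 else 0) hθ0 i1 hBi1 Z
    rw [hgφ]
    simpa [hne] using h
  set Fp : ℝ → ℝ → ℝ := fun v v' => (fφ v + gφ v) * (fφ v' + gφ v') with hFp
  set Fm : ℝ → ℝ → ℝ := fun v v' => (fφ v - gφ v) * (fφ v' - gφ v') with hFm
  set F0 : ℝ → ℝ → ℝ := fun v v' => fφ v * fφ v' with hF0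
  have Ap : ∑ k : Fin T.m, Fp (T.w k) (T.h k) = θ Z := by
    rw [sum_biadd_tiling hzpos T Fp
      (fun a b c => by simp only [hFp, hfadd, hgadd]; ring)
      (fun a b c => by simp only [hFp, hfadd, hgadd]; ring)]
    simp only [hFp, hf1, hg1, hfz, hgz]
    ring
  have Am : ∑ k : Fin T.m, Fm (T.w k) (T.h k) = θ Z := by
    rw [sum_biadd_tiling hzpos T Fm
      (fun a b c => by simp only [hFm, hfadd, hgadd]; ring)
      (fun a b c => by simp only [hFm, hfadd, hgadd]; ring)]
    simp only [hFm, hf1, hg1, hfz, hgz]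
    ring
  have A0 : ∑ k : Fin T.m, F0 (T.w k) (T.h k) = θ Z := by
    rw [sum_biadd_tiling hzpos T F0
      (fun a b c => by simp only [hF0, hfadd]; ring)
      (fun a b c => by simp only [hF0, hfadd]; ring)]
    simp only [hF0, hf1, hfz]
    ring
  set D : Fin T.m → ℝ := fun k =>
    Fp (T.w k) (T.h k) + Fm (T.w k) (T.h k) - 2 * F0 (T.w k) (T.h k) with hD
  have key : ∑ k : Fin T.m, D k = 0 := by
    simp only [hD]
    rw [Finset.sum_sub_distrib, Finset.sum_add_distrib, ← Finset.mul_sum, Ap, Am, A0]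
    ring
  have hDle : ∀ k, D k ≤ 0 := by
    intro k
    obtain ⟨i, u, hc⟩ := hrel k
    set x : Sf p hp hirr := ⟨X i, hX_mem i⟩ with hx
    have hxc : X i = (x : ℝ) := rfl
    have hθx : θ x < 0 := hconjX i
    have hfXu : fφ (X i * u) = θ x * fφ u := hfS x u
    have hgXu : gφ (X i * u) = θ x * gφ u := hgS x u
    rcases hc with ⟨h1, h2⟩ | ⟨h1, h2⟩
    · have hDk : D k = 2 * θ x * (gφ u) ^ 2 := by
        simp only [hD, hFp, hFm, hF0, ← h1, h2, hfXu, hgXu]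
        ring
      rw [hDk]
      nlinarith [sq_nonneg (gφ u)]
    · have hDk : D k = 2 * θ x * (gφ u) ^ 2 := by
        simp only [hD, hFp, hFm, hF0, ← h1, h2, hfXu, hgXu]
        ring
      rw [hDk]
      nlinarith [sq_nonneg (gφ u)]
  have hDlt : D k₀ < 0 := by
    set x : Sf p hp hirr := ⟨X i₀, hX_mem i₀⟩ with hx
    have hxc : X i₀ = (x : ℝ) := rfl
    have hθx : θ x < 0 := hconjX i₀
    have hfXu : fφ (X i₀ * u₀) = θ x * fφ u₀ := hfS x u₀
    have hgXu : gφ (X i₀ * u₀) = θ x * gφ u₀ := hgS x u₀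
    rcases hcase₀ with ⟨h1, h2⟩ | ⟨h1, h2⟩
    · have hDk : D k₀ = 2 * θ x * (gφ u₀) ^ 2 := by
        simp only [hD, hFp, hFm, hF0, ← h1, h2, hfXu, hgXu]
        ring
      rw [hDk, hgu]
      nlinarith
    · have hDk : D k₀ = 2 * θ x * (gφ u₀) ^ 2 := by
        simp only [hD, hFp, hFm, hF0, ← h1, h2, hfXu, hgXu]
        ring
      rw [hDk, hgu]
      nlinarith
  have hlt : ∑ k : Fin T.m, D k < 0 := by
    calc ∑ k : Fin T.m, D k < ∑ _k : Fin T.m, (0 : ℝ) :=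
          Finset.sum_lt_sum (fun k _ => hDle k) ⟨k₀, Finset.mem_univ k₀, hDlt⟩
      _ = 0 := Finset.sum_const_zero
  linarith [key, hlt]

end NoDiv

end

theorem no_diverse_tiling_neg_conj_boundary (p : ℚ) (hp : 0 < p)
    (hirr : Irrational (Real.sqrt p))
    (n : ℕ) (hn : 2 ≤ n) (a b : Fin n → ℚ) (X : Fin n → ℝ)
    (hX : ∀ i, X i = (a i : ℝ) + (b i : ℝ) * Real.sqrt p)
    (hXpos : ∀ i, 0 < X i)
    (hdist : ∀ i j, i ≠ j → Irrational (X i / X j) ∧ Irrational (X i * X j))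
    (hconj : ∀ i, (a i : ℝ) - (b i : ℝ) * Real.sqrt p < 0)
    (e f : ℚ) (z : ℝ) (hz : z = (e : ℝ) + (f : ℝ) * Real.sqrt p) (hzpos : 0 < z)
    (hf : 0 < f)
    (he : |e| / f = Finset.univ.sup' ⟨⟨0, by omega⟩, Finset.mem_univ _⟩
        (fun i => |a i| / b i)) :
    ¬ DiverselyTileable z X := by
  intro hDT
  obtain ⟨T, hall, hdiv⟩ := hDT
  have hirr' : Irrational (NoDiv.sq p) := hirr
  have hsd : NoDiv.sq p = Real.sqrt (p : ℝ) := rfl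
  have hsqpos := NoDiv.sq_pos p hp
  have hsqsq := NoDiv.sq_sq p hp
  simp only [← hsd] at hX hz hconj
  have hbposR : ∀ i, (0:ℝ) < (b i : ℝ) := by
    intro i
    have h1 := hXpos i
    rw [hX i] at h1
    have h2 := hconj i
    nlinarith [hsqpos]
  have hbpos : ∀ i, 0 < b i := fun i => by exact_mod_cast hbposR i
  have haltR : ∀ i, ((a i : ℝ))^2 < (p:ℝ) * ((b i : ℝ))^2 := by
    intro i
    have h1 := hXpos i
    rw [hX i] at h1
    have h2 := hconj i
    nlinarith [mul_pos h1 (show (0:ℝ) < (b i:ℝ) * NoDiv.sq p - (a i:ℝ) by linarith), hsqsq]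
  have halt : ∀ i, (a i)^2 < p * (b i)^2 := fun i => by exact_mod_cast haltR i
  have hne : (Finset.univ : Finset (Fin n)).Nonempty := ⟨⟨0, by omega⟩, Finset.mem_univ _⟩
  set M : ℚ := Finset.univ.sup' hne (fun i => |a i| / b i) with hMdef
  have hMe : |e| / f = M := he
  have hMge : ∀ i, |a i| / b i ≤ M := by
    intro i
    rw [hMdef]
    exact Finset.le_sup' (fun i => |a i| / b i) (Finset.mem_univ i)
  obtain ⟨i₀, -, hMeq⟩ := Finset.exists_mem_eq_sup' hne (fun i => |a i| / b i)
  rw [← hMdef] at hMeq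
  have hMnn : 0 ≤ M := by
    rw [hMeq]
    exact div_nonneg (abs_nonneg _) (hbpos i₀).le
  have habs_le : ∀ i, |a i| ≤ M * b i := fun i => by
    have h := (div_le_iff₀ (hbpos i)).1 (hMge i)
    linarith
  have hM2 : M^2 < p := by
    rw [hMeq, div_pow, sq_abs, div_lt_iff₀ (pow_pos (hbpos i₀) 2)]
    nlinarith [halt i₀]
  have hfne : f ≠ 0 := ne_of_gt hf
  set m0 : ℚ := e / f with hm0def
  have hem : e = m0 * f := by rw [hm0def]; field_simp
  have habsm : |m0| = M := by rw [hm0def, abs_div, abs_of_pos hf, hMe]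
  have hm02 : m0^2 = M^2 := by rw [← habsm, sq_abs]
  set ε : ℚ := if 0 ≤ m0 then 1 else -1 with hεdef
  have hεc : ε = 1 ∨ ε = -1 := by rw [hεdef]; split <;> simp
  have hεm0 : ε * m0 = M := by
    rw [hεdef]
    split
    · rw [one_mul, ← habsm, abs_of_nonneg (by assumption)]
    · rw [← habsm, abs_of_neg (lt_of_not_ge (by assumption))]; ring
  have hεne : ε ≠ 0 := by rcases hεc with h|h <;> rw [h] <;> norm_num
  have hsq_e : ∀ q : ℚ, (ε*q)^2 = q^2 := by
    intro q
    rcases hεc with h|h <;> rw [h] <;> ring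
  have hexj : ∃ j, |a j| / b j < M := by
    have hnt : Nontrivial (Fin n) := Fin.nontrivial_iff_two_le.mpr hn
    obtain ⟨j, hj⟩ := exists_ne i₀
    refine ⟨j, lt_of_le_of_ne (hMge j) ?_⟩
    intro hjeq
    have hcross : |a j| * b i₀ = |a i₀| * b j := by
      have h5 : |a j| / b j = |a i₀| / b i₀ := by rw [hjeq, hMeq]
      rw [div_eq_div_iff (hbpos j).ne' (hbpos i₀).ne'] at h5
      linarith
    have habsab : |a j * b i₀| = |a i₀ * b j| := by
      rw [abs_mul, abs_mul, abs_of_pos (hbpos i₀), abs_of_pos (hbpos j), hcross]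
    have hXi₀ne : X i₀ ≠ 0 := ne_of_gt (hXpos i₀)
    have hbi₀R : ((b i₀ : ℝ)) ≠ 0 := ne_of_gt (hbposR i₀)
    rcases abs_eq_abs.1 habsab with h4 | h4
    · apply (hdist j i₀ hj).1
      have h4R : (a j:ℝ) * (b i₀:ℝ) = (a i₀:ℝ) * (b j:ℝ) := by exact_mod_cast h4
      refine ⟨b j / b i₀, ?_⟩
      push_cast
      rw [div_eq_div_iff hbi₀R hXi₀ne, hX j, hX i₀]
      linear_combination -h4R
    · apply (hdist j i₀ hj).2
      have h4R : (a j:ℝ) * (b i₀:ℝ) = -((a i₀:ℝ) * (b j:ℝ)) := by exact_mod_cast h4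
      refine ⟨a j * a i₀ + p * (b j * b i₀), ?_⟩
      push_cast
      rw [hX j, hX i₀]
      linear_combination (-(b j:ℝ) * (b i₀:ℝ)) * hsqsq + (-(NoDiv.sq p)) * h4R
  obtain ⟨j, hjlt⟩ := hexj
  have hX_mem : ∀ i, X i ∈ NoDiv.Sf p hp hirr' := fun i => ⟨a i, b i, hX i⟩
  have hz_mem : z ∈ NoDiv.Sf p hp hirr' := ⟨e, f, hz⟩
  have hconjX : ∀ i, NoDiv.conj p hp hirr' ⟨X i, hX_mem i⟩ < 0 := by
    intro i
    rw [NoDiv.conj_val p hp hirr' (hX i)]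
    exact hconj i
  have hrel : ∀ k, ∃ i u, (u = T.w k ∧ T.h k = X i * u) ∨ (u = T.h k ∧ T.w k = X i * u) := by
    intro k
    obtain ⟨i, hik⟩ := hall k
    rcases hik with h | h
    · exact ⟨i, T.w k, Or.inl ⟨rfl, (div_eq_iff (ne_of_gt (T.w_pos k))).1 h⟩⟩
    · exact ⟨i, T.h k, Or.inr ⟨rfl, (div_eq_iff (ne_of_gt (T.h_pos k))).1 h⟩⟩
  have hlen := NoDiv.lengths_mem p hp hirr' X hX_mem hconjX z hzpos hz_mem T hrel
  -- Step 2
  have li1 : LinearIndepOn (NoDiv.Sf p hp hirr') id ({(1 : ℝ)} : Set ℝ) := NoDiv.li_one p hp hirr'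
  set B2 := Module.Basis.extend li1 with hB2
  have h1mem : (1:ℝ) ∈ li1.extend (Set.subset_univ _) := li1.subset_extend _ (by simp)
  set j1 : ↥(li1.extend (Set.subset_univ _)) := ⟨1, h1mem⟩ with hj1def
  have hBj1 : B2 j1 = 1 := Module.Basis.extend_apply_self li1 j1
  set θ1 : NoDiv.Sf p hp hirr' → ℝ := fun c => ((NoDiv.co p hp hirr' c).1 : ℝ) with hθ1def
  set θ2 : NoDiv.Sf p hp hirr' → ℝ := fun c => ((NoDiv.co p hp hirr' c).2 : ℝ) with hθ2def
  have hco0 : NoDiv.co p hp hirr' 0 = (0, 0) := NoDiv.co_val p hp hirr' (by norm_num)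
  have hco1 : NoDiv.co p hp hirr' 1 = (1, 0) := NoDiv.co_val p hp hirr' (by norm_num)
  have hcoadd : ∀ x y : NoDiv.Sf p hp hirr', NoDiv.co p hp hirr' (x + y)
      = ((NoDiv.co p hp hirr' x).1 + (NoDiv.co p hp hirr' y).1,
         (NoDiv.co p hp hirr' x).2 + (NoDiv.co p hp hirr' y).2) := by
    intro x y
    apply NoDiv.co_val
    push_cast
    rw [NoDiv.co_spec p hp hirr' x, NoDiv.co_spec p hp hirr' y]
    ring
  have hθ10 : θ1 0 = 0 := by rw [hθ1def]; simp [hco0]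
  have hθ20 : θ2 0 = 0 := by rw [hθ2def]; simp [hco0]
  have hθ1add : ∀ c d, θ1 (c + d) = θ1 c + θ1 d := by
    intro c d
    simp only [hθ1def, hcoadd]
    push_cast
    ring
  have hθ2add : ∀ c d, θ2 (c + d) = θ2 c + θ2 d := by
    intro c d
    simp only [hθ2def, hcoadd]
    push_cast
    ring
  set w2 : ↥(li1.extend (Set.subset_univ _)) → ℝ := fun β => if β = j1 then (1:ℝ) else 0 with hw2
  set φ1 := NoDiv.Phi p hp hirr' B2 θ1 w2 with hφ1
  set φ2 := NoDiv.Phi p hp hirr' B2 θ2 w2 with hφ2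
  have hφ1add : ∀ v v', φ1 (v + v') = φ1 v + φ1 v' :=
    NoDiv.Phi_add p hp hirr' B2 θ1 w2 hθ10 hθ1add
  have hφ2add : ∀ v v', φ2 (v + v') = φ2 v + φ2 v' :=
    NoDiv.Phi_add p hp hirr' B2 θ2 w2 hθ20 hθ2add
  have hφ1S : ∀ x : NoDiv.Sf p hp hirr', φ1 (x : ℝ) = θ1 x := by
    intro x
    have h := NoDiv.Phi_mem p hp hirr' B2 θ1 w2 hθ10 j1 hBj1 x
    rw [hφ1]
    simpa [hw2] using h
  have hφ2S : ∀ x : NoDiv.Sf p hp hirr', φ2 (x : ℝ) = θ2 x := by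
    intro x
    have h := NoDiv.Phi_mem p hp hirr' B2 θ2 w2 hθ20 j1 hBj1 x
    rw [hφ2]
    simpa [hw2] using h
  set G : ℝ → ℝ → ℝ := fun v v' => (ε:ℝ) * (φ1 v * φ1 v' - (m0:ℝ) * (φ1 v * φ2 v' + φ2 v * φ1 v') + ((2*m0^2 - p : ℚ):ℝ) * (φ2 v * φ2 v')) with hG
  have hGsum : ∑ k : Fin T.m, G (T.w k) (T.h k) = G 1 z :=
    sum_biadd_tiling hzpos T G
      (fun x y c => by simp only [hG, hφ1add, hφ2add]; ring)
      (fun x y c => by simp only [hG, hφ1add, hφ2add]; ring)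
  have hφ11 : φ1 (1:ℝ) = 1 := by
    have h := hφ1S 1
    simp only [OneMemClass.coe_one, hθ1def, hco1] at h
    rw [h]
    norm_num
  have hφ21 : φ2 (1:ℝ) = 0 := by
    have h := hφ2S 1
    simp only [OneMemClass.coe_one, hθ2def, hco0, hco1] at h
    rw [h]
    norm_num
  set Z : NoDiv.Sf p hp hirr' := ⟨z, hz_mem⟩ with hZdef
  have hcoZ : NoDiv.co p hp hirr' Z = (e, f) := NoDiv.co_val p hp hirr' hz
  have hφ1z : φ1 z = (e:ℝ) := by
    have h := hφ1S Z
    simp only [hθ1def, hcoZ] at h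
    exact h
  have hφ2z : φ2 z = (f:ℝ) := by
    have h := hφ2S Z
    simp only [hθ2def, hcoZ] at h
    exact h
  have hG1z : G 1 z = 0 := by
    simp only [hG, hφ11, hφ21, hφ1z, hφ2z]
    have hemR : (e:ℝ) = (m0:ℝ) * (f:ℝ) := by exact_mod_cast hem
    push_cast
    linear_combination (ε:ℝ) * hemR
  set Qv : Fin n → ℚ → ℚ → ℚ := fun i u1 u2 =>
    (a i - b i * m0) * u1^2 + (2*m0*(b i * m0 - a i)) * (u1*u2)
      + ((a i)*(2*m0^2 - p) - p*(b i)*m0) * u2^2 with hQv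
  have hQle : ∀ i u1 u2, ε * Qv i u1 u2 ≤ 0 := by
    intro i u1 u2
    have hq := quad_key p (ε*m0) (ε*(a i)) (b i) u1 (ε*u2) (hbpos i)
      (by rw [hεm0]; exact hMnn)
      (by
        rw [hsq_e (a i), hsq_e m0, hm02]
        nlinarith [habs_le i, abs_nonneg (a i), sq_abs (a i)])
      (by rw [hsq_e m0, hm02]; exact hM2)
    calc ε * Qv i u1 u2
        = (ε*(a i) - b i * (ε*m0)) * u1 ^ 2 + (2 * (ε*m0) * (b i * (ε*m0) - ε*(a i))) * (u1 * (ε*u2))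
          + ((ε*(a i)) * (2 * (ε*m0) ^ 2 - p) - p * (b i) * (ε*m0)) * (ε*u2) ^ 2 := by
          rcases hεc with h|h <;> rw [hQv, h] <;> ring
      _ ≤ 0 := hq
  have hQlt : ∀ u1 u2, ¬(u1 = 0 ∧ u2 = 0) → ε * Qv j u1 u2 < 0 := by
    intro u1 u2 hu0
    have hstr : (a j)^2 < M^2 * (b j)^2 := by
      have h6 : |a j| < M * b j := by
        have h7 := (div_lt_iff₀ (hbpos j)).1 hjlt
        linarith
      nlinarith [abs_nonneg (a j), sq_abs (a j)]
    have hq := quad_key_strict p (ε*m0) (ε*(a j)) (b j) u1 (ε*u2) (hbpos j)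
      (by rw [hεm0]; exact hMnn)
      (by rw [hsq_e (a j), hsq_e m0, hm02]; exact hstr)
      (by rw [hsq_e m0, hm02]; exact hM2)
      (by
        intro hc
        apply hu0
        refine ⟨hc.1, ?_⟩
        rcases mul_eq_zero.1 hc.2 with h|h
        · exact absurd h hεne
        · exact h)
    calc ε * Qv j u1 u2
        = (ε*(a j) - b j * (ε*m0)) * u1 ^ 2 + (2 * (ε*m0) * (b j * (ε*m0) - ε*(a j))) * (u1 * (ε*u2))
          + ((ε*(a j)) * (2 * (ε*m0) ^ 2 - p) - p * (b j) * (ε*m0)) * (ε*u2) ^ 2 := by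
          rcases hεc with h|h <;> rw [hQv, h] <;> ring
      _ < 0 := hq
  have hGval : ∀ (k : Fin T.m) (i : Fin n), T.ratioOK k (X i) →
      ∃ u1 u2 : ℚ, ¬(u1 = 0 ∧ u2 = 0) ∧ G (T.w k) (T.h k) = ((ε * Qv i u1 u2 : ℚ) : ℝ) := by
    have hcore : ∀ (i : Fin n) (u : ℝ) (hu : u ∈ NoDiv.Sf p hp hirr'), 0 < u →
        ∃ u1 u2 : ℚ, ¬(u1 = 0 ∧ u2 = 0) ∧
          G u (X i * u) = ((ε * Qv i u1 u2 : ℚ) : ℝ) ∧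
          G (X i * u) u = ((ε * Qv i u1 u2 : ℚ) : ℝ) := by
      intro i u hu hupos
      set uh : NoDiv.Sf p hp hirr' := ⟨u, hu⟩ with huh
      set u1 : ℚ := (NoDiv.co p hp hirr' uh).1 with hu1
      set u2 : ℚ := (NoDiv.co p hp hirr' uh).2 with hu2
      have hcou : u = (u1:ℝ) + (u2:ℝ) * NoDiv.sq p := NoDiv.co_spec p hp hirr' uh
      set x : NoDiv.Sf p hp hirr' := ⟨X i, hX_mem i⟩ with hx
      have hcoxu : NoDiv.co p hp hirr' (x * uh)
          = (a i * u1 + p * (b i * u2), b i * u1 + a i * u2) := by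
        apply NoDiv.co_val
        have hval : ((x * uh : NoDiv.Sf p hp hirr') : ℝ) = X i * u := rfl
        rw [hval, hX i, hcou]
        push_cast
        linear_combination ((b i:ℝ) * (u2:ℝ)) * hsqsq
      have hφ1u : φ1 u = (u1:ℝ) := hφ1S uh
      have hφ2u : φ2 u = (u2:ℝ) := hφ2S uh
      have hφ1xu : φ1 (X i * u) = ((a i * u1 + p * (b i * u2) : ℚ) : ℝ) := by
        have h := hφ1S (x * uh)
        simp only [hθ1def, hcoxu] at h
        exact h
      have hφ2xu : φ2 (X i * u) = ((b i * u1 + a i * u2 : ℚ) : ℝ) := by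
        have h := hφ2S (x * uh)
        simp only [hθ2def, hcoxu] at h
        exact h
      refine ⟨u1, u2, ?_, ?_, ?_⟩
      · rintro ⟨h1, h2⟩
        rw [h1, h2] at hcou
        norm_num at hcou
        linarith
      · simp only [hG, hφ1u, hφ2u, hφ1xu, hφ2xu, hQv]
        push_cast
        ring
      · simp only [hG, hφ1u, hφ2u, hφ1xu, hφ2xu, hQv]
        push_cast
        ring
    intro k i hik
    rcases hik with h | h
    · have hrel1 : T.h k = X i * T.w k := (div_eq_iff (ne_of_gt (T.w_pos k))).1 h
      obtain ⟨u1, u2, hu0, hg1, -⟩ := hcore i (T.w k) (hlen k).1 (T.w_pos k)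
      exact ⟨u1, u2, hu0, by rw [hrel1]; exact hg1⟩
    · have hrel1 : T.w k = X i * T.h k := (div_eq_iff (ne_of_gt (T.h_pos k))).1 h
      obtain ⟨u1, u2, hu0, -, hg2⟩ := hcore i (T.h k) (hlen k).2 (T.h_pos k)
      exact ⟨u1, u2, hu0, by rw [hrel1]; exact hg2⟩
  have hGle : ∀ k, G (T.w k) (T.h k) ≤ 0 := by
    intro k
    obtain ⟨i, hik⟩ := hall k
    obtain ⟨u1, u2, -, hGe⟩ := hGval k i hik
    rw [hGe]
    exact_mod_cast hQle i u1 u2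
  obtain ⟨kj, hkj⟩ := hdiv j
  have hGlt : G (T.w kj) (T.h kj) < 0 := by
    obtain ⟨u1, u2, hu0, hGe⟩ := hGval kj j hkj
    rw [hGe]
    exact_mod_cast hQlt u1 u2 hu0
  have hfin : ∑ k : Fin T.m, G (T.w k) (T.h k) < 0 := by
    calc ∑ k : Fin T.m, G (T.w k) (T.h k) < ∑ _k : Fin T.m, (0:ℝ) :=
        Finset.sum_lt_sum (fun k _ => hGle k) ⟨kj, Finset.mem_univ kj, hGlt⟩
      _ = 0 := Finset.sum_const_zero
  rw [hGsum, hG1z] at hfin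
  exact lt_irrefl 0 hfin
end

section
/- Let p be a positive rational with √p irrational, and let a₁, b₁, e, f be rationals with a₁ > 0, b₁ > 0, e ≥ 0, f > 0, a₁ − b₁√p < 0, and f·a₁ − e·b₁ ≥ 0 (i.e. e/f ≤ a₁/b₁). Then the rectangle of aspect ratio e + f√p can be tiled by finitely many rectangles all of aspect ratio a₁ + b₁√p. -/
lemma Icc_partition (m : ℕ) (hm : 0 < m) :
    Set.Icc (0:ℝ) 1 = ⋃ k : Fin m, Set.Icc ((k:ℝ)/m) (((k:ℝ)+1)/m) := by
  have hmR : (0:ℝ) < m := by exact_mod_cast hm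
  ext x
  simp only [Set.mem_iUnion, Set.mem_Icc]
  constructor
  · rintro ⟨hx0, hx1⟩
    set k0 := min ⌊x * m⌋₊ (m - 1) with hk0
    have hk0m : k0 < m := by
      have : k0 ≤ m - 1 := min_le_right _ _
      omega
    refine ⟨⟨k0, hk0m⟩, ?_, ?_⟩
    · have h1 : (k0 : ℝ) ≤ ⌊x * m⌋₊ := by
        exact_mod_cast Nat.cast_le.mpr (min_le_left _ _)
      have h2 : (⌊x * m⌋₊ : ℝ) ≤ x * m := Nat.floor_le (by positivity)
      rw [div_le_iff₀ hmR]
      exact le_trans h1 h2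
    · rcases le_or_gt ⌊x * m⌋₊ (m - 1) with hc | hc
      · have hk : k0 = ⌊x * m⌋₊ := min_eq_left hc
        have h3 : x * m < (⌊x * m⌋₊ : ℝ) + 1 := Nat.lt_floor_add_one _
        rw [le_div_iff₀ hmR]
        show x * m ≤ (k0 : ℝ) + 1
        rw [hk]
        linarith
      · have hk : k0 = m - 1 := min_eq_right (by omega)
        have : ((k0 : ℝ) + 1) = m := by
          rw [hk]
          have : ((m - 1 : ℕ) : ℝ) = (m : ℝ) - 1 := by
            push_cast [Nat.cast_sub hm]; ring
          rw [this]; ring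
        rw [this, le_div_iff₀ hmR]
        nlinarith
  · rintro ⟨⟨k, hk⟩, h1, h2⟩
    constructor
    · refine le_trans ?_ h1
      positivity
    · refine le_trans h2 ?_
      rw [div_le_one hmR]
      have : (k : ℝ) + 1 ≤ m := by exact_mod_cast Nat.succ_le_of_lt hk
      exact this

/-- A horizontal row of `m` congruent tiles filling `[0,1] × [0,H]`. -/
noncomputable def rowTiling (m : ℕ) (hm : 0 < m) (H : ℝ) (hH : 0 < H) : RectTiling H where
  m := m
  px k := (k : ℝ) / m
  py _ := 0
  w _ := 1 / m
  h _ := H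
  w_pos _ := by positivity
  h_pos _ := hH
  cover := by
    have key : ∀ k : Fin m, ((k:ℝ)/m + 1/m) = (((k:ℝ)+1)/m) := by
      intro k; ring
    rw [Icc_partition m hm, Set.iUnion_prod_const]
    refine Set.iUnion_congr fun k => ?_
    rw [key k, zero_add]
  disj := by
    have hmR : (0:ℝ) < m := by exact_mod_cast hm
    have main : ∀ k l : Fin m, (k:ℕ) < l →
        Disjoint ((Set.Ioo ((k:ℝ)/m) ((k:ℝ)/m + 1/m)) ×ˢ (Set.Ioo (0:ℝ) (0 + H)))
                 ((Set.Ioo ((l:ℝ)/m) ((l:ℝ)/m + 1/m)) ×ˢ (Set.Ioo (0:ℝ) (0 + H))) := by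
      intro k l hkl
      rw [Set.disjoint_left]
      rintro ⟨x, y⟩ ⟨⟨h1, h2⟩, -⟩ ⟨⟨h3, -⟩, -⟩
      have hkl' : (k:ℝ) + 1 ≤ l := by exact_mod_cast Nat.succ_le_of_lt hkl
      have : (k:ℝ)/m + 1/m ≤ (l:ℝ)/m := by
        rw [← add_div, div_le_div_iff₀ hmR hmR]
        nlinarith
      simp only at h1 h2 h3
      linarith
    intro k l hkl
    rcases lt_or_gt_of_ne (fun h => hkl (Fin.ext h) : (k:ℕ) ≠ l) with h | h
    · exact main k l h
    · exact (main l k h).symm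

lemma tile_subset {r : ℝ} (T : RectTiling r) (k : Fin T.m) :
    Set.Icc (T.px k) (T.px k + T.w k) ×ˢ Set.Icc (T.py k) (T.py k + T.h k) ⊆
      Set.Icc (0:ℝ) 1 ×ˢ Set.Icc (0:ℝ) r := by
  rw [T.cover]
  exact Set.subset_iUnion
    (fun k => Set.Icc (T.px k) (T.px k + T.w k) ×ˢ Set.Icc (T.py k) (T.py k + T.h k)) k

lemma py_nonneg {r : ℝ} (T : RectTiling r) (k : Fin T.m) : 0 ≤ T.py k := by
  have := tile_subset T k (Set.mk_mem_prod
    (Set.left_mem_Icc.mpr (by linarith [T.w_pos k]))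
    (Set.left_mem_Icc.mpr (by linarith [T.h_pos k])))
  exact this.2.1

lemma py_top {r : ℝ} (T : RectTiling r) (k : Fin T.m) : T.py k + T.h k ≤ r := by
  have := tile_subset T k (Set.mk_mem_prod
    (Set.left_mem_Icc.mpr (by linarith [T.w_pos k]))
    (Set.right_mem_Icc.mpr (by linarith [T.h_pos k])))
  exact this.2.2

lemma iUnion_fin_add {α : Type*} {m n : ℕ} (F : Fin (m + n) → Set α) :
    (⋃ k, F k) = (⋃ i : Fin m, F (Fin.castAdd n i)) ∪ (⋃ j : Fin n, F (Fin.natAdd m j)) := by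
  ext x
  simp only [Set.mem_iUnion, Set.mem_union]
  constructor
  · rintro ⟨k, hk⟩
    exact Fin.addCases (motive := fun k => x ∈ F k →
        (∃ i, x ∈ F (Fin.castAdd n i)) ∨ ∃ j, x ∈ F (Fin.natAdd m j))
      (fun i hi => Or.inl ⟨i, hi⟩) (fun j hj => Or.inr ⟨j, hj⟩) k hk
  · rintro (⟨i, hi⟩ | ⟨j, hj⟩)
    exacts [⟨_, hi⟩, ⟨_, hj⟩]

/-- Stack two tilings vertically. -/
lemma tileable_add {r₁ r₂ : ℝ} (h₁ : 0 ≤ r₁) (h₂ : 0 ≤ r₂) {n : ℕ} {X : Fin n → ℝ}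
    (T1 : Tileable r₁ X) (T2 : Tileable r₂ X) : Tileable (r₁ + r₂) X := by
  obtain ⟨A, hA⟩ := T1
  obtain ⟨B, hB⟩ := T2
  refine ⟨⟨A.m + B.m,
    Fin.append A.px B.px, Fin.append A.py (fun k => B.py k + r₁),
    Fin.append A.w B.w, Fin.append A.h B.h, ?_, ?_, ?_, ?_⟩, ?_⟩
  · intro k
    refine Fin.addCases (fun i => ?_) (fun j => ?_) k
    · simpa using A.w_pos i
    · simpa using B.w_pos j
  · intro k
    refine Fin.addCases (fun i => ?_) (fun j => ?_) k
    · simpa using A.h_pos i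
    · simpa using B.h_pos j
  · -- cover
    have hsplit : Set.Icc (0:ℝ) (r₁ + r₂) = Set.Icc 0 r₁ ∪ Set.Icc r₁ (r₁ + r₂) :=
      (Set.Icc_union_Icc_eq_Icc h₁ (by linarith)).symm
    rw [hsplit, Set.prod_union, iUnion_fin_add]
    congr 1
    · rw [A.cover]
      refine Set.iUnion_congr fun i => ?_
      simp [Fin.append_left]
    · have : Set.Icc (0:ℝ) 1 ×ˢ Set.Icc r₁ (r₁ + r₂) =
          ⋃ j : Fin B.m, Set.Icc (B.px j) (B.px j + B.w j) ×ˢ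
            Set.Icc (B.py j + r₁) (B.py j + r₁ + B.h j) := by
        ext ⟨x, y⟩
        have hB' := Set.ext_iff.mp B.cover (x, y - r₁)
        simp only [Set.mem_prod, Set.mem_Icc, Set.mem_iUnion] at hB' ⊢
        constructor
        · rintro ⟨hx, hy1, hy2⟩
          obtain ⟨j, hj1, hj2, hj3⟩ := hB'.mp ⟨hx, by linarith, by linarith⟩
          exact ⟨j, hj1, by linarith, by linarith⟩
        · rintro ⟨j, hj1, hj2, hj3⟩
          have := hB'.mpr ⟨j, hj1, by linarith, by linarith⟩
          exact ⟨this.1, by linarith [this.2.1, py_nonneg B j],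
            by linarith [this.2.2, py_top B j]⟩
      rw [this]
      refine Set.iUnion_congr fun j => ?_
      simp [Fin.append_right]
  · -- disjointness
    intro k l
    induction k using Fin.addCases with
    | left i =>
      induction l using Fin.addCases with
      | left i' =>
        intro h
        simp only [Fin.append_left]
        exact A.disj i i' (fun hc => h (by rw [hc]))
      | right j' =>
        intro _
        simp only [Fin.append_left, Fin.append_right]
        rw [Set.disjoint_left]
        rintro ⟨x, y⟩ hm1 hm2
        simp only [Set.mem_prod, Set.mem_Ioo] at hm1 hm2
        have := py_top A i
        have := py_nonneg B j'
        linarith [hm1.2.2, hm2.2.1]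
    | right j =>
      induction l using Fin.addCases with
      | left i' =>
        intro _
        simp only [Fin.append_left, Fin.append_right]
        rw [Set.disjoint_left]
        rintro ⟨x, y⟩ hm1 hm2
        simp only [Set.mem_prod, Set.mem_Ioo] at hm1 hm2
        have := py_top A i'
        have := py_nonneg B j
        linarith [hm1.2.1, hm2.2.2]
      | right j' =>
        intro h
        simp only [Fin.append_right]
        have hne : j ≠ j' := fun hc => h (by rw [hc])
        have := B.disj j j' hne
        rw [Set.disjoint_left] at this ⊢
        rintro ⟨x, y⟩ hm1 hm2
        simp only [Set.mem_prod, Set.mem_Ioo] at hm1 hm2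
        exact this (a := (x, y - r₁))
          (Set.mk_mem_prod (Set.mem_Ioo.mpr ⟨hm1.1.1, hm1.1.2⟩)
            (Set.mem_Ioo.mpr ⟨by linarith [hm1.2.1], by linarith [hm1.2.2]⟩))
          (Set.mk_mem_prod (Set.mem_Ioo.mpr ⟨hm2.1.1, hm2.1.2⟩)
            (Set.mem_Ioo.mpr ⟨by linarith [hm2.2.1], by linarith [hm2.2.2]⟩))
  · -- ratios
    intro k
    refine Fin.addCases (fun i => ?_) (fun j => ?_) k
    · obtain ⟨i', hi'⟩ := hA i
      refine ⟨i', ?_⟩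
      unfold RectTiling.ratioOK at hi' ⊢
      simpa [Fin.append_left] using hi'
    · obtain ⟨j', hj'⟩ := hB j
      refine ⟨j', ?_⟩
      unfold RectTiling.ratioOK at hj' ⊢
      simpa [Fin.append_right] using hj'

lemma tileable_row {x : ℝ} (m : ℕ) (hm : 0 < m) (H : ℝ) (hH : 0 < H)
    (hr : (m : ℝ) * H = x ∨ ((m : ℝ) * H)⁻¹ = x) :
    Tileable H (fun _ : Fin 1 => x) := by
  refine ⟨rowTiling m hm H hH, fun k => ⟨0, ?_⟩⟩
  have hmR : (0:ℝ) < m := by exact_mod_cast hm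
  unfold RectTiling.ratioOK rowTiling
  simp only
  rcases hr with hr | hr
  · left
    rw [← hr]
    field_simp
  · right
    rw [← hr]
    field_simp

lemma tileable_nsmul {s : ℝ} (hs : 0 < s) {n : ℕ} {X : Fin n → ℝ}
    (h : Tileable s X) : ∀ k : ℕ, 0 < k → Tileable ((k : ℝ) * s) X := by
  intro k hk
  induction k with
  | zero => omega
  | succ k ih =>
    rcases Nat.eq_zero_or_pos k with rfl | hk'
    · simpa using h
    · have : ((k + 1 : ℕ) : ℝ) * s = (k : ℝ) * s + s := by push_cast; ring
      rw [this]
      exact tileable_add (by positivity) hs.le (ih hk') h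

lemma rat_repr {q : ℚ} (hq : 0 < q) :
    ∃ n m : ℕ, 0 < n ∧ 0 < m ∧ (q : ℝ) = (n : ℝ) / (m : ℝ) := by
  have hnum : 0 < q.num := Rat.num_pos.mpr hq
  refine ⟨q.num.toNat, q.den, by omega, q.den_pos, ?_⟩
  have h1 : ((q.num.toNat : ℤ)) = q.num := Int.toNat_of_nonneg hnum.le
  rw [Rat.cast_def]
  congr 1
  exact_mod_cast h1.symm

theorem tiling_single_ratio_explicit (p : ℚ) (hp : 0 < p)
    (hirr : Irrational (Real.sqrt p))
    (a₁ b₁ e f : ℚ) (ha : 0 < a₁) (hb : 0 < b₁) (he : 0 ≤ e) (hf : 0 < f)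
    (hconj : (a₁ : ℝ) - (b₁ : ℝ) * Real.sqrt p < 0)
    (hfe : 0 ≤ f * a₁ - e * b₁) :
    Tileable ((e : ℝ) + (f : ℝ) * Real.sqrt p)
      (fun _ : Fin 1 => (a₁ : ℝ) + (b₁ : ℝ) * Real.sqrt p) := by
  have hp' : (0:ℝ) < p := by exact_mod_cast hp
  set s : ℝ := Real.sqrt p with hsdef
  have hs0 : 0 < s := Real.sqrt_pos.mpr hp'
  have hss : s * s = p := Real.mul_self_sqrt hp'.le
  set x : ℝ := (a₁ : ℝ) + (b₁ : ℝ) * s with hxdef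
  have haR : (0:ℝ) < (a₁:ℝ) := by exact_mod_cast ha
  have hbR : (0:ℝ) < (b₁:ℝ) := by exact_mod_cast hb
  have heR : (0:ℝ) ≤ (e:ℝ) := by exact_mod_cast he
  have hfR : (0:ℝ) < (f:ℝ) := by exact_mod_cast hf
  have hx : 0 < x := by rw [hxdef]; positivity
  set q₁ : ℚ := (e * b₁ + f * a₁) / (2 * a₁ * b₁) with hq1
  set q₂ : ℚ := (b₁ ^ 2 * p - a₁ ^ 2) * (f * a₁ - e * b₁) / (2 * a₁ * b₁) with hq2
  have hq1pos : 0 < q₁ := by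
    apply div_pos
    · exact add_pos_of_nonneg_of_pos (mul_nonneg he hb.le) (mul_pos hf ha)
    · positivity
  have hd : 0 < b₁ ^ 2 * p - a₁ ^ 2 := by
    have h1 : (a₁:ℝ) ^ 2 < (b₁:ℝ) ^ 2 * p := by nlinarith [hss, hs0, hconj]
    have h2 : (a₁:ℚ) ^ 2 < b₁ ^ 2 * p := by exact_mod_cast h1
    linarith
  have hq2nonneg : 0 ≤ q₂ := by
    apply div_nonneg
    · exact mul_nonneg hd.le hfe
    · positivity
  have hdR : (0:ℝ) < (b₁:ℝ) ^ 2 * p - (a₁:ℝ) ^ 2 := by exact_mod_cast hd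
  have hxinv : x⁻¹ = ((b₁:ℝ) * s - a₁) / ((b₁:ℝ) ^ 2 * p - (a₁:ℝ) ^ 2) := by
    rw [eq_div_iff (ne_of_gt hdR), inv_mul_eq_div, div_eq_iff (ne_of_gt hx)]
    rw [hxdef]
    linear_combination (-(b₁:ℝ) ^ 2) * hss
  have key : (e:ℝ) + (f:ℝ) * s = (q₁:ℝ) * x + (q₂:ℝ) * x⁻¹ := by
    rw [hxinv, hq1, hq2, hxdef]
    push_cast
    field_simp
    ring
  -- first block
  obtain ⟨n₁, m₁, hn₁, hm₁, hq1r⟩ := rat_repr hq1pos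
  have hH1 : (0:ℝ) < x / (m₁:ℝ) := by
    have : (0:ℝ) < (m₁:ℝ) := by exact_mod_cast hm₁
    positivity
  have hm₁R : (0:ℝ) < (m₁:ℝ) := by exact_mod_cast hm₁
  have hrow1 : Tileable (x / (m₁:ℝ)) (fun _ : Fin 1 => x) := by
    refine tileable_row m₁ hm₁ _ hH1 (Or.inl ?_)
    field_simp
  have h1t : Tileable ((q₁:ℝ) * x) (fun _ : Fin 1 => x) := by
    have := tileable_nsmul hH1 hrow1 n₁ hn₁
    have heq : ((n₁:ℝ)) * (x / (m₁:ℝ)) = (q₁:ℝ) * x := by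
      rw [hq1r]; ring
    rwa [heq] at this
  rcases eq_or_lt_of_le hq2nonneg with h0 | hq2pos
  · have heq : (e:ℝ) + (f:ℝ) * s = (q₁:ℝ) * x := by
      rw [key, ← h0]
      push_cast
      ring
    rwa [heq]
  · obtain ⟨n₂, m₂, hn₂, hm₂, hq2r⟩ := rat_repr hq2pos
    have hm₂R : (0:ℝ) < (m₂:ℝ) := by exact_mod_cast hm₂
    have hH2 : (0:ℝ) < ((m₂:ℝ) * x)⁻¹ := by positivity
    have hrow2 : Tileable (((m₂:ℝ) * x)⁻¹) (fun _ : Fin 1 => x) := by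
      refine tileable_row m₂ hm₂ _ hH2 (Or.inr ?_)
      rw [mul_inv, inv_inv, ← mul_assoc, inv_mul_cancel₀ (ne_of_gt hm₂R), one_mul]
    have h2t : Tileable ((q₂:ℝ) * x⁻¹) (fun _ : Fin 1 => x) := by
      have := tileable_nsmul hH2 hrow2 n₂ hn₂
      have heq : ((n₂:ℝ)) * ((m₂:ℝ) * x)⁻¹ = (q₂:ℝ) * x⁻¹ := by
        rw [hq2r, mul_inv]
        ring
      rwa [heq] at this
    have hfinal := tileable_add (by positivity) (by positivity) h1t h2t
    rwa [key]
end
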